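/- Let D be an ICC group, E ≤ D a subgroup of finite index, and d ∈ D with d ≠ 1. Then the set {e d e⁻¹ : e ∈ E} is infinite. -/

import Mathlib

/-- Let `D` be an ICC group, `E ≤ D` a finite index subgroup, and
`d ∈ D` with `d ≠ 1`. Then `{e d e⁻¹ : e ∈ E}` is infinite. -/
theorem icc_conjClass_under_finiteIndex_infinite
    {D : Type*} [Group D]
    (hicc : ∀ d : D, d ≠ 1 → {x : D | ∃ y : D, x = y * d * y⁻¹}.Infinite)
    (E : Subgroup D) (hE : E.FiniteIndex)
    (d : D) (hd : d ≠ 1) :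
    {x : D | ∃ e ∈ E, x = e * d * e⁻¹}.Infinite := by
  by_contra h
  rw [Set.not_infinite] at h
  haveI := hE
  haveI : Finite (D ⧸ E) := inferInstance
  apply (hicc d hd)
  have hsub : {x : D | ∃ y : D, x = y * d * y⁻¹} ⊆
      ⋃ q : D ⧸ E, (fun x => q.out * x * q.out⁻¹) '' {x : D | ∃ e ∈ E, x = e * d * e⁻¹} := by
    rintro x ⟨y, rfl⟩
    refine Set.mem_iUnion.2 ⟨QuotientGroup.mk y, ?_⟩
    set r := (QuotientGroup.mk y : D ⧸ E).out with hr
    have hmk : (QuotientGroup.mk r : D ⧸ E) = QuotientGroup.mk y := QuotientGroup.out_eq' _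
    have he : r⁻¹ * y ∈ E := by
      rwa [QuotientGroup.eq] at hmk
    refine ⟨(r⁻¹ * y) * d * (r⁻¹ * y)⁻¹, ⟨r⁻¹ * y, he, rfl⟩, ?_⟩
    simp only [mul_inv_rev, inv_inv]
    group
  exact Set.Finite.subset (Set.finite_iUnion fun q => h.image _) hsub
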